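/- Let ρ ≥ |μ| and let z₂ : {x : Im x ≤ 0, |x| ≥ ρ} → ℂ² be continuous and bounded, satisfying for every x = R·e^{iθ} in its domain the equation z₂(R e^{iθ}) = A(R e^{iθ})·( z₂⁰ − ½ ∫_R^∞ g²(R e^{iθ}, r e^{iθ})·(J + μB)·(μ e^{−iθ}/r²)·z₂(r e^{iθ}) dr ) with absolutely convergent integral. Define w(x) = −K·z₂(−x) for Im x ≥ 0, |x| ≥ ρ. Then w satisfies the corresponding j = 1 equation: for every x = R·e^{iθ} with θ ∈ [0,π] and R ≥ ρ, w(R e^{iθ}) = A(R e^{iθ})·( z₁⁰ − ½ ∫_R^∞ g¹(R e^{iθ}, r e^{iθ})·(J + μB)·(μ e^{−iθ}/r²)·w(r e^{iθ}) dr ). -/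

import Mathlib

open Complex Matrix Set MeasureTheory

noncomputable def Bmat : Matrix (Fin 2) (Fin 2) ℂ := !![0, 1; -1, 0]
noncomputable def Jmat : Matrix (Fin 2) (Fin 2) ℂ := !![0, 1; 1, 0]
noncomputable def Kmat : Matrix (Fin 2) (Fin 2) ℂ := !![1, 0; 0, -1]

noncomputable def Amat (μ : ℂ) (x : ℂ) : Matrix (Fin 2) (Fin 2) ℂ :=
  (1 - μ ^ 2 / (4 * x ^ 2))⁻¹ • (1 + (μ / (2 * x)) • Jmat)

/-- `z₁⁰ = (i,1)ᵀ` (index 0), `z₂⁰ = (-i,1)ᵀ` (index 1). -/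
noncomputable def z0vec : Fin 2 → Fin 2 → ℂ :=
  ![![Complex.I, 1], ![-Complex.I, 1]]

/-- The kernels `g¹` (index 0) and `g²` (index 1). -/
noncomputable def gker (j : Fin 2) (x t : ℂ) : Matrix (Fin 2) (Fin 2) ℂ :=
  if j = 0 then
    (1 / (2 * Complex.I)) • ((Complex.I • (1 : Matrix (Fin 2) (Fin 2) ℂ) - Bmat) +
      Complex.exp (2 * Complex.I * (t - x)) • (Complex.I • (1 : Matrix (Fin 2) (Fin 2) ℂ) + Bmat))
  else
    (1 / (2 * Complex.I)) • (Complex.exp (-(2 * Complex.I * (t - x))) •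
      (Complex.I • (1 : Matrix (Fin 2) (Fin 2) ℂ) - Bmat) +
      (Complex.I • (1 : Matrix (Fin 2) (Fin 2) ℂ) + Bmat))

lemma exp_shift (θ s : ℝ) :
    (s:ℂ) * Complex.exp ((↑(θ - Real.pi):ℂ) * Complex.I) =
      -((s:ℂ) * Complex.exp ((θ:ℂ) * Complex.I)) := by
  push_cast
  rw [sub_mul, Complex.exp_sub, Complex.exp_pi_mul_I]
  ring

lemma exp_neg_shift (θ : ℝ) :
    Complex.exp (-(↑(θ - Real.pi):ℂ) * Complex.I) = -Complex.exp (-(θ:ℂ) * Complex.I) := by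
  push_cast
  rw [show (-((θ:ℂ) - (Real.pi:ℂ))) * Complex.I = -(θ:ℂ) * Complex.I + (Real.pi:ℂ) * Complex.I by ring,
    Complex.exp_add, Complex.exp_pi_mul_I]
  ring

lemma Kg (x t : ℂ) : Kmat * gker 1 (-x) (-t) = gker 0 x t * Kmat := by
  unfold gker
  rw [if_neg (by decide : ¬(1:Fin 2) = 0), if_pos rfl,
    show -(2 * Complex.I * (-t - -x)) = 2 * Complex.I * (t - x) by ring]
  ext i j
  fin_cases i <;> fin_cases j <;>
    simp [Kmat, Bmat, Matrix.mul_apply, Fin.sum_univ_two, Matrix.smul_apply,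
      Matrix.add_apply, Matrix.sub_apply, Matrix.one_apply] <;> ring

lemma Km2 (μ : ℂ) : Kmat * (Jmat + μ • Bmat) = -((Jmat + μ • Bmat) * Kmat) := by
  ext i j
  fin_cases i <;> fin_cases j <;>
    simp [Kmat, Bmat, Jmat, Matrix.mul_apply, Fin.sum_univ_two, Matrix.smul_apply,
      Matrix.add_apply, Matrix.neg_apply] <;> ring

lemma KA (μ x : ℂ) : Kmat * Amat μ (-x) = Amat μ x * Kmat := by
  unfold Amat
  rw [show (-x)^2 = x^2 by ring, show μ / (2 * -x) = -(μ/(2*x)) by rw [mul_neg, div_neg]]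
  ext i j
  fin_cases i <;> fin_cases j <;>
    simp [Kmat, Jmat, Matrix.mul_apply, Fin.sum_univ_two, Matrix.smul_apply,
      Matrix.add_apply, Matrix.one_apply] <;> ring

lemma Kz : -(Kmat.mulVec (z0vec 1)) = z0vec 0 := by
  funext i
  fin_cases i <;>
    simp [Kmat, z0vec, Matrix.mulVec, dotProduct, Fin.sum_univ_two]

lemma keyvec (μ x t s : ℂ) (v : Fin 2 → ℂ) :
    s • ((gker 0 x t * (Jmat + μ • Bmat)).mulVec (-(Kmat.mulVec v))) =
      -(Kmat.mulVec ((-s) • ((gker 1 (-x) (-t) * (Jmat + μ • Bmat)).mulVec v))) := by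
  have hM : Kmat * (gker 1 (-x) (-t) * (Jmat + μ • Bmat)) =
      -((gker 0 x t * (Jmat + μ • Bmat)) * Kmat) := by
    rw [← Matrix.mul_assoc, Kg, Matrix.mul_assoc, Km2, Matrix.mul_neg,
      ← Matrix.mul_assoc, Matrix.mul_assoc]
  rw [Matrix.mulVec_smul, Matrix.mulVec_mulVec, hM, Matrix.mulVec_neg, Matrix.neg_mulVec,
    Matrix.mulVec_mulVec]
  module

theorem stmt6 (μ : ℂ) (hμ : 0 < μ.re) (ρ : ℝ) (hρ : ‖μ‖ ≤ ρ)
    (z₂ : ℂ → Fin 2 → ℂ)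
    (hcont : ContinuousOn z₂ {x : ℂ | x.im ≤ 0 ∧ ρ ≤ ‖x‖})
    (hbdd : ∃ M : ℝ, ∀ x ∈ {x : ℂ | x.im ≤ 0 ∧ ρ ≤ ‖x‖}, ‖z₂ x‖ ≤ M)
    (heq : ∀ R θ : ℝ, ρ ≤ R → ((R : ℂ) * Complex.exp (θ * Complex.I)).im ≤ 0 →
      (IntegrableOn (fun r : ℝ =>
          (μ * Complex.exp (-(θ : ℂ) * Complex.I) / (r : ℂ) ^ 2) •
            ((gker 1 ((R : ℂ) * Complex.exp (θ * Complex.I))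
                ((r : ℂ) * Complex.exp (θ * Complex.I)) *
              (Jmat + μ • Bmat)).mulVec (z₂ ((r : ℂ) * Complex.exp (θ * Complex.I)))))
        (Set.Ioi R)) ∧
      z₂ ((R : ℂ) * Complex.exp (θ * Complex.I)) =
        (Amat μ ((R : ℂ) * Complex.exp (θ * Complex.I))).mulVec
          (z0vec 1 - (1 / 2 : ℂ) • ∫ r in Set.Ioi R,
            (μ * Complex.exp (-(θ : ℂ) * Complex.I) / (r : ℂ) ^ 2) •
              ((gker 1 ((R : ℂ) * Complex.exp (θ * Complex.I))
                  ((r : ℂ) * Complex.exp (θ * Complex.I)) *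
                (Jmat + μ • Bmat)).mulVec
                (z₂ ((r : ℂ) * Complex.exp (θ * Complex.I))))))
    (w : ℂ → Fin 2 → ℂ)
    (hw : ∀ x : ℂ, 0 ≤ x.im → ρ ≤ ‖x‖ → w x = -(Kmat.mulVec (z₂ (-x)))) :
    ∀ R θ : ℝ, ρ ≤ R → 0 ≤ θ → θ ≤ Real.pi →
      (IntegrableOn (fun r : ℝ =>
          (μ * Complex.exp (-(θ : ℂ) * Complex.I) / (r : ℂ) ^ 2) •
            ((gker 0 ((R : ℂ) * Complex.exp (θ * Complex.I))
                ((r : ℂ) * Complex.exp (θ * Complex.I)) *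
              (Jmat + μ • Bmat)).mulVec (w ((r : ℂ) * Complex.exp (θ * Complex.I)))))
        (Set.Ioi R)) ∧
      w ((R : ℂ) * Complex.exp (θ * Complex.I)) =
        (Amat μ ((R : ℂ) * Complex.exp (θ * Complex.I))).mulVec
          (z0vec 0 - (1 / 2 : ℂ) • ∫ r in Set.Ioi R,
            (μ * Complex.exp (-(θ : ℂ) * Complex.I) / (r : ℂ) ^ 2) •
              ((gker 0 ((R : ℂ) * Complex.exp (θ * Complex.I))
                  ((r : ℂ) * Complex.exp (θ * Complex.I)) *
                (Jmat + μ • Bmat)).mulVec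
                (w ((r : ℂ) * Complex.exp (θ * Complex.I))))) := by
  intro R θ hR hθ0 hθπ
  have hμ0 : μ ≠ 0 := by rintro rfl; simp at hμ
  have hρ0 : (0:ℝ) < ρ := lt_of_lt_of_le (norm_pos_iff.mpr hμ0) hρ
  have hR0 : (0:ℝ) < R := lt_of_lt_of_le hρ0 hR
  have him : ∀ s : ℝ, 0 ≤ s → 0 ≤ ((s:ℂ) * Complex.exp ((θ:ℂ) * Complex.I)).im := by
    intro s hs
    have h : ((s:ℂ) * Complex.exp ((θ:ℂ) * Complex.I)).im = s * Real.sin θ := by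
      simp [Complex.mul_im, Complex.exp_ofReal_mul_I_re, Complex.exp_ofReal_mul_I_im]
    rw [h]
    exact mul_nonneg hs (Real.sin_nonneg_of_nonneg_of_le_pi hθ0 hθπ)
  have hnorm : ∀ s : ℝ, 0 ≤ s → ‖(s:ℂ) * Complex.exp ((θ:ℂ) * Complex.I)‖ = s := by
    intro s hs
    rw [norm_mul, Complex.norm_exp_ofReal_mul_I, mul_one, Complex.norm_real,
      Real.norm_of_nonneg hs]
  obtain ⟨hint, hz⟩ := heq R (θ - Real.pi) hR
    (by rw [exp_shift θ R, Complex.neg_im]; exact neg_nonpos.mpr (him R hR0.le))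
  simp only [exp_neg_shift, exp_shift, mul_neg, neg_div] at hint hz
  have key : ∀ r : ℝ, r ∈ Ioi R →
      (μ * Complex.exp (-(θ:ℂ) * Complex.I) / (r:ℂ) ^ 2) •
        ((gker 0 ((R:ℂ) * Complex.exp ((θ:ℂ) * Complex.I))
            ((r:ℂ) * Complex.exp ((θ:ℂ) * Complex.I)) *
          (Jmat + μ • Bmat)).mulVec (w ((r:ℂ) * Complex.exp ((θ:ℂ) * Complex.I)))) =
      -(Kmat.mulVec ((-(μ * Complex.exp (-(θ:ℂ) * Complex.I) / (r:ℂ) ^ 2)) •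
        ((gker 1 (-((R:ℂ) * Complex.exp ((θ:ℂ) * Complex.I)))
            (-((r:ℂ) * Complex.exp ((θ:ℂ) * Complex.I))) *
          (Jmat + μ • Bmat)).mulVec
          (z₂ (-((r:ℂ) * Complex.exp ((θ:ℂ) * Complex.I))))))) := by
    intro r hr
    have hr0 : (0:ℝ) ≤ r := le_trans hR0.le (le_of_lt hr)
    rw [hw ((r:ℂ) * Complex.exp ((θ:ℂ) * Complex.I)) (him r hr0)
      (by rw [hnorm r hr0]; exact le_trans hR (le_of_lt hr))]
    exact keyvec μ _ _ _ _
  set L : (Fin 2 → ℂ) →L[ℂ] (Fin 2 → ℂ) :=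
    -(LinearMap.toContinuousLinearMap (Matrix.mulVecLin Kmat)) with hLdef
  have hL : ∀ u : Fin 2 → ℂ, L u = -(Kmat.mulVec u) := by
    intro u; simp [hLdef]
  have hint2 := L.integrable_comp hint
  have hae : (fun r : ℝ => L ((-(μ * Complex.exp (-(θ:ℂ) * Complex.I) / (r:ℂ) ^ 2)) •
      ((gker 1 (-((R:ℂ) * Complex.exp ((θ:ℂ) * Complex.I)))
          (-((r:ℂ) * Complex.exp ((θ:ℂ) * Complex.I))) *
        (Jmat + μ • Bmat)).mulVec
        (z₂ (-((r:ℂ) * Complex.exp ((θ:ℂ) * Complex.I))))))) =ᵐ[volume.restrict (Ioi R)]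
      (fun r : ℝ => (μ * Complex.exp (-(θ:ℂ) * Complex.I) / (r:ℂ) ^ 2) •
        ((gker 0 ((R:ℂ) * Complex.exp ((θ:ℂ) * Complex.I))
            ((r:ℂ) * Complex.exp ((θ:ℂ) * Complex.I)) *
          (Jmat + μ • Bmat)).mulVec (w ((r:ℂ) * Complex.exp ((θ:ℂ) * Complex.I))))) := by
    filter_upwards [ae_restrict_mem measurableSet_Ioi] with r hr
    rw [hL, ← key r hr]
  refine ⟨hint2.congr hae, ?_⟩
  have hIeq : (∫ r in Ioi R, (μ * Complex.exp (-(θ:ℂ) * Complex.I) / (r:ℂ) ^ 2) •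
      ((gker 0 ((R:ℂ) * Complex.exp ((θ:ℂ) * Complex.I))
          ((r:ℂ) * Complex.exp ((θ:ℂ) * Complex.I)) *
        (Jmat + μ • Bmat)).mulVec (w ((r:ℂ) * Complex.exp ((θ:ℂ) * Complex.I))))) =
      -(Kmat.mulVec (∫ r in Ioi R, (-(μ * Complex.exp (-(θ:ℂ) * Complex.I) / (r:ℂ) ^ 2)) •
        ((gker 1 (-((R:ℂ) * Complex.exp ((θ:ℂ) * Complex.I)))
            (-((r:ℂ) * Complex.exp ((θ:ℂ) * Complex.I))) *
          (Jmat + μ • Bmat)).mulVec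
          (z₂ (-((r:ℂ) * Complex.exp ((θ:ℂ) * Complex.I))))))) := by
    rw [← hL, ← ContinuousLinearMap.integral_comp_comm L hint]
    exact (integral_congr_ae hae).symm
  rw [hw ((R:ℂ) * Complex.exp ((θ:ℂ) * Complex.I)) (him R hR0.le)
      (by rw [hnorm R hR0.le]; exact hR), hz,
    Matrix.mulVec_mulVec, KA, ← Matrix.mulVec_mulVec, ← Matrix.mulVec_neg]
  congr 1
  rw [Matrix.mulVec_sub, Matrix.mulVec_smul]
  have hK : Kmat.mulVec (∫ r in Ioi R, (-(μ * Complex.exp (-(θ:ℂ) * Complex.I) / (r:ℂ) ^ 2)) •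
      ((gker 1 (-((R:ℂ) * Complex.exp ((θ:ℂ) * Complex.I)))
          (-((r:ℂ) * Complex.exp ((θ:ℂ) * Complex.I))) *
        (Jmat + μ • Bmat)).mulVec
        (z₂ (-((r:ℂ) * Complex.exp ((θ:ℂ) * Complex.I)))))) =
      -(∫ r in Ioi R, (μ * Complex.exp (-(θ:ℂ) * Complex.I) / (r:ℂ) ^ 2) •
        ((gker 0 ((R:ℂ) * Complex.exp ((θ:ℂ) * Complex.I))
            ((r:ℂ) * Complex.exp ((θ:ℂ) * Complex.I)) *
          (Jmat + μ • Bmat)).mulVec (w ((r:ℂ) * Complex.exp ((θ:ℂ) * Complex.I))))) := by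
    rw [hIeq, neg_neg]
  rw [hK, ← Kz]
  module
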